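/- Let X be a nonempty topological space, k ≥ 1, and let H_1, …, H_k : X → ℝ be continuous functions such that 0 ≤ H_j ≤ 1 for each j, the supports of the H_j are pairwise disjoint, each H_j attains the value 1 at some point of X, and there exists a point of X at which all the H_j vanish. Then for every τ = (τ_1, …, τ_k) ∈ ℝ^k the function H_τ = Σ_{j=1}^k τ_j H_j satisfies osc(H_τ) = osc_0(τ); in other words, the linear map τ ↦ H_τ is an isometric embedding of (ℝ^k, osc_0) into the continuous bounded functions on X equipped with the oscillation osc. -/

import Mathlib

/-- The oscillation of a real-valued function: `osc f = sup f - inf f`. -/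
noncomputable def oscFun {X : Type*} (f : X → ℝ) : ℝ :=
  sSup (Set.range f) - sInf (Set.range f)

/-- The oscillation of a vector `τ ∈ ℝ^{n+1}`:
`osc τ = max_{j, j'} (τ_j - τ_{j'})`. -/
noncomputable def osc {n : ℕ} (τ : Fin (n + 1) → ℝ) : ℝ :=
  Finset.univ.sup' Finset.univ_nonempty
    (fun p : Fin (n + 1) × Fin (n + 1) => τ p.1 - τ p.2)

/-- `osc_0 : ℝ^k → ℝ` is the restriction of `osc` to `0 ⊕ ℝ^k ⊆ ℝ^{k+1}`,
i.e. `osc_0 (τ_1, …, τ_k) = osc (0, τ_1, …, τ_k)`. -/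
noncomputable def osc₀ {k : ℕ} (τ : Fin k → ℝ) : ℝ :=
  osc (Fin.cons 0 τ)

/-- Let `X` be a nonempty topological space and `H_1, …, H_k : X → ℝ` (`k ≥ 1`)
continuous functions with `0 ≤ H_j ≤ 1`, pairwise disjoint supports, each
attaining the value `1`, and all vanishing simultaneously at some point. Then
for every `τ ∈ ℝ^k`, the function `H_τ = Σ_j τ_j H_j` satisfies
`osc (H_τ) = osc_0 (τ)`: the linear map `τ ↦ H_τ` is an isometric embedding of
`(ℝ^k, osc_0)` into the bounded continuous functions on `X` with `osc`. -/
theorem osc_sum_bump_eq_osc₀ (X : Type*) [TopologicalSpace X] [Nonempty X]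
    (k : ℕ) (hk : 1 ≤ k) (H : Fin k → X → ℝ)
    (hcont : ∀ j, Continuous (H j))
    (hbdd : ∀ j, ∀ x, 0 ≤ H j x ∧ H j x ≤ 1)
    (hdisj : ∀ j j', j ≠ j' →
      Disjoint (Function.support (H j)) (Function.support (H j')))
    (hone : ∀ j, ∃ x, H j x = 1)
    (hzero : ∃ x, ∀ j, H j x = 0) :
    ∀ τ : Fin k → ℝ, oscFun (fun x => ∑ j, τ j * H j x) = osc₀ τ := by

  intro τ
  set g : Fin (k + 1) → ℝ := Fin.cons 0 τ with hg
  set f : X → ℝ := fun x => ∑ j, τ j * H j x with hf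
  have hne : (Finset.univ : Finset (Fin (k + 1))).Nonempty := Finset.univ_nonempty
  have hvan : ∀ (j₀ : Fin k) (x : X), H j₀ x ≠ 0 → ∀ j', j' ≠ j₀ → H j' x = 0 := by
    intro j₀ x hx j' hj'
    by_contra h
    exact Set.disjoint_left.mp (hdisj j' j₀ hj') h hx
  have hmem : ∀ j : Fin (k + 1), g j ∈ Set.range f := by
    intro j
    induction j using Fin.cases with
    | zero =>
      obtain ⟨x, hx⟩ := hzero
      exact ⟨x, by simp [hf, hx, hg]⟩
    | succ i =>
      obtain ⟨x, hx⟩ := hone i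
      have hv : ∀ j', j' ≠ i → H j' x = 0 := hvan i x (by rw [hx]; norm_num)
      refine ⟨x, ?_⟩
      have hsum : (∑ j, τ j * H j x) = τ i * H i x := by
        apply Finset.sum_eq_single
        · intro b _ hb; rw [hv b hb]; ring
        · intro h; exact absurd (Finset.mem_univ i) h
      simp [hf, hsum, hx, hg]
  have hub : ∀ x, f x ≤ Finset.univ.sup' hne g := by
    intro x
    have h0 : (0 : ℝ) ≤ Finset.univ.sup' hne g := by
      have := Finset.le_sup' g (Finset.mem_univ (0 : Fin (k + 1)))
      exact (by simp [hg] : (0 : ℝ) = g 0).trans_le this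
    by_cases hall : ∀ j, H j x = 0
    · have : f x = 0 := by simp [hf, hall]
      rw [this]; exact h0
    · push_neg at hall
      obtain ⟨j₀, hj₀⟩ := hall
      have hv := hvan j₀ x hj₀
      have hfx : f x = τ j₀ * H j₀ x := by
        simp only [hf]
        apply Finset.sum_eq_single
        · intro b _ hb; rw [hv b hb]; ring
        · intro h; exact absurd (Finset.mem_univ j₀) h
      have hτ : g j₀.succ = τ j₀ := by simp [hg]
      rcases le_total (τ j₀) 0 with h | h
      · have : f x ≤ 0 := hfx ▸ mul_nonpos_of_nonpos_of_nonneg h (hbdd j₀ x).1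
        exact this.trans h0
      · have h1 : f x ≤ τ j₀ := by
          rw [hfx]
          nlinarith [(hbdd j₀ x).1, (hbdd j₀ x).2]
        exact h1.trans (hτ ▸ Finset.le_sup' g (Finset.mem_univ j₀.succ))
  have hlb : ∀ x, Finset.univ.inf' hne g ≤ f x := by
    intro x
    have h0 : Finset.univ.inf' hne g ≤ (0 : ℝ) := by
      have := Finset.inf'_le g (Finset.mem_univ (0 : Fin (k + 1)))
      exact this.trans_eq (by simp [hg] : g 0 = (0 : ℝ))
    by_cases hall : ∀ j, H j x = 0
    · have : f x = 0 := by simp [hf, hall]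
      rw [this]; exact h0
    · push_neg at hall
      obtain ⟨j₀, hj₀⟩ := hall
      have hv := hvan j₀ x hj₀
      have hfx : f x = τ j₀ * H j₀ x := by
        simp only [hf]
        apply Finset.sum_eq_single
        · intro b _ hb; rw [hv b hb]; ring
        · intro h; exact absurd (Finset.mem_univ j₀) h
      have hτ : g j₀.succ = τ j₀ := by simp [hg]
      rcases le_total 0 (τ j₀) with h | h
      · have : (0 : ℝ) ≤ f x := hfx ▸ mul_nonneg h (hbdd j₀ x).1
        exact h0.trans this
      · have h1 : τ j₀ ≤ f x := by
          rw [hfx]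
          nlinarith [(hbdd j₀ x).1, (hbdd j₀ x).2]
        exact le_trans (hτ ▸ Finset.inf'_le g (Finset.mem_univ j₀.succ)) h1
  have hbddA : BddAbove (Set.range f) := ⟨_, by rintro y ⟨x, rfl⟩; exact hub x⟩
  have hbddB : BddBelow (Set.range f) := ⟨_, by rintro y ⟨x, rfl⟩; exact hlb x⟩
  have hsup : sSup (Set.range f) = Finset.univ.sup' hne g := by
    apply le_antisymm
    · exact csSup_le (Set.range_nonempty f) (by rintro y ⟨x, rfl⟩; exact hub x)
    · obtain ⟨j, _, hj⟩ := Finset.exists_mem_eq_sup' hne g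
      rw [hj]; exact le_csSup hbddA (hmem j)
  have hinf : sInf (Set.range f) = Finset.univ.inf' hne g := by
    apply le_antisymm
    · obtain ⟨j, _, hj⟩ := Finset.exists_mem_eq_inf' hne g
      rw [hj]; exact csInf_le hbddB (hmem j)
    · exact le_csInf (Set.range_nonempty f) (by rintro y ⟨x, rfl⟩; exact hlb x)
  have hosc : osc₀ τ = Finset.univ.sup' hne g - Finset.univ.inf' hne g := by
    rw [osc₀, osc]
    apply le_antisymm
    · apply Finset.sup'_le
      intro p _
      exact sub_le_sub (Finset.le_sup' g (Finset.mem_univ p.1))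
        (Finset.inf'_le g (Finset.mem_univ p.2))
    · obtain ⟨a, _, ha⟩ := Finset.exists_mem_eq_sup' hne g
      obtain ⟨b, _, hb⟩ := Finset.exists_mem_eq_inf' hne g
      rw [ha, hb]
      exact Finset.le_sup' (fun p : Fin (k + 1) × Fin (k + 1) => g p.1 - g p.2)
        (Finset.mem_univ (a, b))
  rw [oscFun, hsup, hinf, hosc]
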